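/- arXiv:0908.0696 — 4 statements merged into one kernel-verified Lean document; each statement's English description precedes it below -/
import Mathlib

section
/- Let (M,L) and (M,L̃) be conformally related Finsler manifolds with g̃ = e^{2σ(x)}g. Then (M,L) is semi-C-reducible if and only if (M,L̃) is semi-C-reducible (with the same scalar functions μ, τ). Consequently, (M,L) is C-reducible if and only if (M,L̃) is C-reducible, and (M,L) is C₂-like if and only if (M,L̃) is C₂-like. -/
/-!
Conformal invariance of semi-C-reducibility (with the same scalar functions
μ, τ), and consequently of C-reducibility and of being C₂-like.

`V` is the module of π-vector fields of the `n`-dimensional Finsler manifold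
`(M,L)`; `T`, `Tt` are the Cartan tensors, `hb`, `hbt` the angular metric
tensors, `C = C̃ = Ct` the contracted torsions and `Csq`, `Csqt` the functions
`C² = ĝ(C,C)` of the conformally related Finsler manifolds `(M,L)`, `(M,L̃)`.
All scalar identities are stated pointwise on `𝒯M` (variable `u`).
-/
theorem semi_C_reducible_conformally_invariant
    {M TM V : Type*}
    (n : ℕ) (hn : 3 ≤ n)
    (σ : M → ℝ) (proj : TM → M)
    (T Tt : V → V → V → TM → ℝ)
    (hb hbt : V → V → TM → ℝ)
    (C Ct : V → TM → ℝ)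
    (Csq Csqt : TM → ℝ)
    -- conformal change: T̃ = e^{2σ}T, ℏ̃ = e^{2σ}ℏ, C̃ = C, C̃² = e^{−2σ}C²
    (hTt : ∀ X Y Z u, Tt X Y Z u = Real.exp (2 * σ (proj u)) * T X Y Z u)
    (hhbt : ∀ X Y u, hbt X Y u = Real.exp (2 * σ (proj u)) * hb X Y u)
    (hCt : ∀ X, Ct X = C X)
    (hCsqt : ∀ u, Csqt u = Real.exp (-(2 * σ (proj u))) * Csq u) :
    -- semi-C-reducibility, with the same scalar functions μ, τ (μ + τ = 1)
    (∀ μ τ : TM → ℝ, (∀ u, μ u + τ u = 1) →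
      ((∀ X Y Z u, T X Y Z u =
          μ u / ((n : ℝ) + 1) *
            (hb X Y u * C Z u + hb Y Z u * C X u + hb Z X u * C Y u)
          + τ u / Csq u * (C X u * C Y u * C Z u))
        ↔ (∀ X Y Z u, Tt X Y Z u =
            μ u / ((n : ℝ) + 1) *
              (hbt X Y u * Ct Z u + hbt Y Z u * Ct X u + hbt Z X u * Ct Y u)
            + τ u / Csqt u * (Ct X u * Ct Y u * Ct Z u))))
    ∧
    -- C-reducibility is conformally invariant
    ((∀ X Y Z u, T X Y Z u =
        1 / ((n : ℝ) + 1) *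
          (hb X Y u * C Z u + hb Y Z u * C X u + hb Z X u * C Y u))
      ↔ (∀ X Y Z u, Tt X Y Z u =
          1 / ((n : ℝ) + 1) *
            (hbt X Y u * Ct Z u + hbt Y Z u * Ct X u + hbt Z X u * Ct Y u)))
    ∧
    -- being C₂-like is conformally invariant
    ((∀ X Y Z u, T X Y Z u = 1 / Csq u * (C X u * C Y u * C Z u))
      ↔ (∀ X Y Z u, Tt X Y Z u = 1 / Csqt u * (Ct X u * Ct Y u * Ct Z u))) := by
  have key : ∀ (u : TM) (τ : ℝ),
      τ / Csqt u = Real.exp (2 * σ (proj u)) * (τ / Csq u) := by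
    intro u τ
    rw [hCsqt, Real.exp_neg, div_eq_mul_inv, mul_inv, inv_inv, div_eq_mul_inv]
    ring
  have hE : ∀ u : TM, Real.exp (2 * σ (proj u)) ≠ 0 := fun u => Real.exp_ne_zero _
  refine ⟨?_, ?_, ?_⟩
  · intro μ τ _
    constructor
    · intro h X Y Z u
      rw [hTt, h, key]
      simp only [hhbt, hCt]
      ring
    · intro h X Y Z u
      have h2 := h X Y Z u
      rw [hTt, key] at h2
      simp only [hhbt, hCt] at h2
      apply mul_left_cancel₀ (hE u)
      refine h2.trans ?_
      ring
  · constructor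
    · intro h X Y Z u
      rw [hTt, h]
      simp only [hhbt, hCt]
      ring
    · intro h X Y Z u
      have h2 := h X Y Z u
      rw [hTt] at h2
      simp only [hhbt, hCt] at h2
      apply mul_left_cancel₀ (hE u)
      refine h2.trans ?_
      ring
  · constructor
    · intro h X Y Z u
      rw [hTt, h, show (1:ℝ) / Csqt u = _ from key u 1]
      simp only [hCt]
      ring
    · intro h X Y Z u
      have h2 := h X Y Z u
      rw [hTt, show (1:ℝ) / Csqt u = _ from key u 1] at h2
      simp only [hCt] at h2
      apply mul_left_cancel₀ (hE u)
      refine h2.trans ?_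
      ring
end

section
/- Let (M,L) and (M,L̃) be conformally related Finsler manifolds with g̃ = e^{2σ(x)}g. Then (M,L) is quasi-C-reducible if and only if (M,L̃) is quasi-C-reducible. -/
theorem quasi_C_reducible_conformally_invariant
    {M TM V : Type*}
    (n : ℕ) (hn : 3 ≤ n)
    (σ : M → ℝ) (proj : TM → M)
    (T Tt : V → V → V → TM → ℝ)
    (C Ct : V → TM → ℝ)
    (η : V)
    -- conformal change: T̃ = e^{2σ}T, C̃ = C
    (hTt : ∀ X Y Z u, Tt X Y Z u = Real.exp (2 * σ (proj u)) * T X Y Z u)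
    (hCt : ∀ X, Ct X = C X) :
    (∃ A : V → V → TM → ℝ,
        (∀ X Y, A X Y = A Y X) ∧ (∀ X, A X η = 0) ∧
        (∀ X Y Z u, T X Y Z u =
          A X Y u * C Z u + A Y Z u * C X u + A Z X u * C Y u))
      ↔ (∃ A : V → V → TM → ℝ,
          (∀ X Y, A X Y = A Y X) ∧ (∀ X, A X η = 0) ∧
          (∀ X Y Z u, Tt X Y Z u =
            A X Y u * Ct Z u + A Y Z u * Ct X u + A Z X u * Ct Y u)) := by
  constructor
  · rintro ⟨A, hsym, hind, hT⟩
    refine ⟨fun X Y u => Real.exp (2 * σ (proj u)) * A X Y u, ?_, ?_, ?_⟩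
    · intro X Y; funext u; dsimp only; rw [hsym]
    · intro X; funext u; dsimp only; rw [hind]; simp
    · intro X Y Z u
      rw [hTt, hT, hCt, hCt, hCt]; ring
  · rintro ⟨A, hsym, hind, hT⟩
    refine ⟨fun X Y u => Real.exp (-(2 * σ (proj u))) * A X Y u, ?_, ?_, ?_⟩
    · intro X Y; funext u; dsimp only; rw [hsym]
    · intro X; funext u; dsimp only; rw [hind]; simp
    · intro X Y Z u
      have h := hT X Y Z u
      rw [hTt, hCt, hCt, hCt] at h
      have he : Real.exp (2 * σ (proj u)) ≠ 0 := Real.exp_ne_zero _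
      have : T X Y Z u = Real.exp (-(2 * σ (proj u))) *
          (A X Y u * C Z u + A Y Z u * C X u + A Z X u * C Y u) := by
        rw [← h, Real.exp_neg]
        field_simp
      rw [this]; ring
end

section
/- Let (M,L) and (M,L̃) be conformally related Finsler manifolds with g̃ = e^{2σ(x)}g. Then (M,L) is S₃-like if and only if (M,L̃) is S₃-like, and (M,L) is S₄-like if and only if (M,L̃) is S₄-like. -/
/-!
Conformal invariance of being S₃-like and of being S₄-like.

`V` is the module of π-vector fields of the `n`-dimensional Finsler manifold
`(M,L)`; `S`, `St` are the (0,4) v-curvature tensors of the Cartan connections,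
`hb`, `hbt` the angular metrics, `Ricv`, `Ricvt` the vertical Ricci tensors and
`Scv`, `Scvt` the vertical scalar curvatures of the conformally related Finsler
manifolds `(M,L)`, `(M,L̃)`.  All scalar identities are stated pointwise on
`𝒯M` (variable `u`).
-/
theorem S3_S4_like_conformally_invariant
    {M TM V : Type*}
    (n : ℕ)
    (σ : M → ℝ) (proj : TM → M)
    (S St : V → V → V → V → TM → ℝ)
    (hb hbt : V → V → TM → ℝ)
    (Ricv Ricvt : V → V → TM → ℝ)
    (Scv Scvt : TM → ℝ)
    -- conformal change: S̃ = e^{2σ}S (as a (0,4)-tensor), ℏ̃ = e^{2σ}ℏ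
    (hSt : ∀ X Y Z Wb u, St X Y Z Wb u = Real.exp (2 * σ (proj u)) * S X Y Z Wb u)
    (hhbt : ∀ X Y u, hbt X Y u = Real.exp (2 * σ (proj u)) * hb X Y u)
    -- Scᵛ·ℏ is conformally invariant
    (hScvhb : ∀ X Y u, Scvt u * hbt X Y u = Scv u * hb X Y u)
    -- F := (1/(n−3)){Ricᵛ − Scᵛℏ/(2(n−2))} is conformally invariant
    (hF : ∀ X Y u,
      ((n : ℝ) - 3)⁻¹ * (Ricvt X Y u - Scvt u * hbt X Y u / (2 * ((n : ℝ) - 2)))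
        = ((n : ℝ) - 3)⁻¹ * (Ricv X Y u - Scv u * hb X Y u / (2 * ((n : ℝ) - 2)))) :
    let F : V → V → TM → ℝ := fun X Y u =>
      ((n : ℝ) - 3)⁻¹ * (Ricv X Y u - Scv u * hb X Y u / (2 * ((n : ℝ) - 2)))
    let Ft : V → V → TM → ℝ := fun X Y u =>
      ((n : ℝ) - 3)⁻¹ * (Ricvt X Y u - Scvt u * hbt X Y u / (2 * ((n : ℝ) - 2)))
    -- (M,L) is S₃-like (dim M ≥ 4) iff (M,L̃) is S₃-like
    ((4 ≤ n) →
      ((∀ X Y Z Wb u, S X Y Z Wb u =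
          Scv u / (((n : ℝ) - 1) * ((n : ℝ) - 2)) *
            (hb X Z u * hb Y Wb u - hb X Wb u * hb Y Z u))
        ↔ (∀ X Y Z Wb u, St X Y Z Wb u =
            Scvt u / (((n : ℝ) - 1) * ((n : ℝ) - 2)) *
              (hbt X Z u * hbt Y Wb u - hbt X Wb u * hbt Y Z u))))
    ∧
    -- (M,L) is S₄-like (dim M ≥ 5) iff (M,L̃) is S₄-like
    ((5 ≤ n) →
      ((∀ X Y Z Wb u, S X Y Z Wb u =
          hb X Z u * F Y Wb u - hb Y Z u * F X Wb u
            + hb Y Wb u * F X Z u - hb X Wb u * F Y Z u)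
        ↔ (∀ X Y Z Wb u, St X Y Z Wb u =
            hbt X Z u * Ft Y Wb u - hbt Y Z u * Ft X Wb u
              + hbt Y Wb u * Ft X Z u - hbt X Wb u * Ft Y Z u))) := by
  intro F Ft
  have hFeq : ∀ X Y u, Ft X Y u = F X Y u := fun X Y u => hF X Y u
  have key : ∀ (X Y Z Wb : V) (u : TM),
      Scvt u * (hbt X Z u * hbt Y Wb u - hbt X Wb u * hbt Y Z u)
        = Real.exp (2 * σ (proj u)) *
            (Scv u * (hb X Z u * hb Y Wb u - hb X Wb u * hb Y Z u)) := by
    intro X Y Z Wb u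
    calc Scvt u * (hbt X Z u * hbt Y Wb u - hbt X Wb u * hbt Y Z u)
        = (Scvt u * hbt X Z u) * hbt Y Wb u
            - (Scvt u * hbt X Wb u) * hbt Y Z u := by ring
      _ = (Scv u * hb X Z u) * (Real.exp (2 * σ (proj u)) * hb Y Wb u)
            - (Scv u * hb X Wb u) * (Real.exp (2 * σ (proj u)) * hb Y Z u) := by
          rw [hScvhb, hScvhb, hhbt, hhbt]
      _ = _ := by ring
  constructor
  · intro _
    constructor
    · intro h X Y Z Wb u
      rw [hSt, h]
      have k := key X Y Z Wb u
      linear_combination -(((n : ℝ) - 1) * ((n : ℝ) - 2))⁻¹ * k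
    · intro h X Y Z Wb u
      have e2 := hSt X Y Z Wb u
      rw [h] at e2
      have k := key X Y Z Wb u
      have hx : Real.exp (2 * σ (proj u)) ≠ 0 := Real.exp_ne_zero _
      apply mul_left_cancel₀ hx
      rw [← e2]
      rw [div_mul_eq_mul_div, key]
      ring
  · intro _
    constructor
    · intro h X Y Z Wb u
      rw [hSt, h, hFeq (Y) (Wb) u |>.symm]
      simp only [hhbt, hFeq]
      ring
    · intro h X Y Z Wb u
      have e2 := hSt X Y Z Wb u
      rw [h] at e2
      have hx : Real.exp (2 * σ (proj u)) ≠ 0 := Real.exp_ne_zero _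
      apply mul_left_cancel₀ hx
      rw [← e2]
      simp only [hhbt, hFeq]
      ring
end

section
/- Let (M,L) and (M,L̃) be conformally related Finsler manifolds with g̃ = e^{2σ(x)}g, and assume that the π-tensor field H satisfies H(η̄,X̄)η̄ = 0 for all X̄. Then (M,L) is of scalar curvature if and only if (M,L̃) is of scalar curvature; moreover, if R(η̄,X̄,η̄,Ȳ) = kL²ℏ(X̄,Ȳ) then R̃(η̄,X̄,η̄,Ȳ) = k₀L̃²ℏ̃(X̄,Ȳ) with k₀ = e^{−2σ(x)}k. -/
/-!
Conformal invariance of being of scalar curvature, assuming `H(η̄,X̄)η̄ = 0`.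

`V` is the module of π-vector fields over the ring `TM → ℝ`, `η` the
fundamental π-vector field; `g`, `gt` are the Finsler metrics, `L`, `Lt` the
fundamental functions, `hb`, `hbt` the angular metrics, and `R`, `Rt` the
(1,3) h-curvature tensors of the Cartan connections of the conformally related
Finsler manifolds `(M,L)`, `(M,L̃)`, related by `R̃(X̄,Ȳ)Z̄ = R(X̄,Ȳ)Z̄ +
H(X̄,Ȳ)Z̄`.  `(M,L)` is of scalar curvature iff there is `k : 𝒯M → ℝ` with
`g(R(η̄,X̄)η̄,Ȳ) = k L² ℏ(X̄,Ȳ)`.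
-/
theorem scalar_curvature_conformally_invariant
    {M TM V : Type*} [AddCommGroup V] [Module (TM → ℝ) V]
    (σ : M → ℝ) (proj : TM → M)
    (g gt : V → V → TM → ℝ)
    (hb hbt : V → V → TM → ℝ)
    (L Lt : TM → ℝ)
    (R Rt H : V → V → V → V)
    (η : V)
    -- conformal change: g̃ = e^{2σ}g, L̃² = e^{2σ}L², ℏ̃ = e^{2σ}ℏ
    (hconf : ∀ X Y u, gt X Y u = Real.exp (2 * σ (proj u)) * g X Y u)
    (hLt : ∀ u, (Lt u) ^ 2 = Real.exp (2 * σ (proj u)) * (L u) ^ 2)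
    (hhbt : ∀ X Y u, hbt X Y u = Real.exp (2 * σ (proj u)) * hb X Y u)
    -- conformal change of the Cartan h-curvature: R̃(X̄,Ȳ)Z̄ = R(X̄,Ȳ)Z̄ + H(X̄,Ȳ)Z̄
    (hRt : ∀ X Y Z, Rt X Y Z = R X Y Z + H X Y Z)
    -- assumption: H(η̄,X̄)η̄ = 0
    (hH : ∀ X, H η X η = 0) :
    -- (M,L) is of scalar curvature iff (M,L̃) is of scalar curvature
    ((∃ k : TM → ℝ, ∀ X Y u,
        g (R η X η) Y u = k u * (L u) ^ 2 * hb X Y u)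
      ↔ (∃ k : TM → ℝ, ∀ X Y u,
          gt (Rt η X η) Y u = k u * (Lt u) ^ 2 * hbt X Y u))
    ∧
    -- moreover, if R(η̄,X̄,η̄,Ȳ) = k L² ℏ(X̄,Ȳ), then
    -- R̃(η̄,X̄,η̄,Ȳ) = k₀ L̃² ℏ̃(X̄,Ȳ) with k₀ = e^{−2σ(x)} k
    (∀ k : TM → ℝ,
      (∀ X Y u, g (R η X η) Y u = k u * (L u) ^ 2 * hb X Y u) →
      (∀ X Y u, gt (Rt η X η) Y u =
        (Real.exp (-(2 * σ (proj u))) * k u) * (Lt u) ^ 2 * hbt X Y u)) := by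
  have hR : ∀ X, Rt η X η = R η X η := by
    intro X; rw [hRt, hH, add_zero]
  have key : ∀ (k : TM → ℝ), (∀ X Y u, g (R η X η) Y u = k u * (L u) ^ 2 * hb X Y u) →
      (∀ X Y u, gt (Rt η X η) Y u =
        (Real.exp (-(2 * σ (proj u))) * k u) * (Lt u) ^ 2 * hbt X Y u) := by
    intro k hk X Y u
    rw [hR, hconf, hk, hLt, hhbt, Real.exp_neg]
    have := Real.exp_pos (2 * σ (proj u))
    field_simp
  refine ⟨⟨fun ⟨k, hk⟩ => ⟨fun u => Real.exp (-(2 * σ (proj u))) * k u, key k hk⟩,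
    fun ⟨k, hk⟩ => ⟨fun u => Real.exp (2 * σ (proj u)) * k u, ?_⟩⟩, key⟩
  intro X Y u
  have h := hk X Y u
  rw [hR, hconf, hLt, hhbt] at h
  have hp := Real.exp_pos (2 * σ (proj u))
  have := mul_left_cancel₀ (ne_of_gt hp)
    (by linarith [h] : Real.exp (2 * σ (proj u)) * g (R η X η) Y u =
      Real.exp (2 * σ (proj u)) * ((Real.exp (2 * σ (proj u)) * k u) * (L u) ^ 2 * hb X Y u))
  exact this
end
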